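/- Let N ≥ 2 be a natural number. Assume 0 < π0 < 1 and π1, π2, π3 > 0. Then the N-flagella steady-state length L_ss^N = ((1 + π0π2 + π1/N)/(2π0π3))·(√(1 + 4(1−π0)π0π3/(N·(1 + π0π2 + π1/N)²)) − 1) is positive, satisfies N·L_ss^N < 1, and satisfies the steady-state relation J_ss·(1 − N·L_ss^N) − π0 − π1·J_ss·L_ss^N = 0, where J_ss = 1/(1 + N·π2·L_ss^N + N·π3·(L_ss^N)²). Moreover it is the unique nonnegative solution of this relation. -/

import Mathlib

noncomputable section

/-- The `N`-flagella steady-state length `L_ss^N`. -/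
def LssN (π0 π1 π2 π3 : ℝ) (N : ℕ) : ℝ :=
  ((1 + π0 * π2 + π1 / N) / (2 * π0 * π3)) *
    (Real.sqrt (1 + 4 * (1 - π0) * π0 * π3 / (N * (1 + π0 * π2 + π1 / N) ^ 2)) - 1)

/-- the `N`-flagella steady-state length is positive, satisfies
`N·L_ss^N < 1` and the steady-state relation
`J_ss·(1 − N·L_ss^N) − π0 − π1·J_ss·L_ss^N = 0` with
`J_ss = 1/(1 + N·π2·L_ss^N + N·π3·(L_ss^N)²)`, and is the unique nonnegative root
of this relation. -/
theorem LssN_properties (π0 π1 π2 π3 : ℝ) (N : ℕ) (hN : 2 ≤ N)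
    (hπ0 : 0 < π0) (hπ0' : π0 < 1) (hπ1 : 0 < π1) (hπ2 : 0 < π2) (hπ3 : 0 < π3) :
    0 < LssN π0 π1 π2 π3 N ∧
    (N : ℝ) * LssN π0 π1 π2 π3 N < 1 ∧
    (1 / (1 + N * π2 * LssN π0 π1 π2 π3 N + N * π3 * (LssN π0 π1 π2 π3 N) ^ 2)) *
        (1 - N * LssN π0 π1 π2 π3 N) - π0 -
      π1 * (1 / (1 + N * π2 * LssN π0 π1 π2 π3 N +
          N * π3 * (LssN π0 π1 π2 π3 N) ^ 2)) * LssN π0 π1 π2 π3 N = 0 ∧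
    (∀ x : ℝ, 0 ≤ x →
      (1 / (1 + N * π2 * x + N * π3 * x ^ 2)) * (1 - N * x) - π0 -
          π1 * (1 / (1 + N * π2 * x + N * π3 * x ^ 2)) * x = 0 →
      x = LssN π0 π1 π2 π3 N) := by
  have hNpos : (0:ℝ) < N := by positivity
  have hNne : (N:ℝ) ≠ 0 := ne_of_gt hNpos
  set a : ℝ := 1 + π0 * π2 + π1 / N with ha_def
  set c : ℝ := 4 * (1 - π0) * π0 * π3 / (N * a ^ 2) with hc_def
  set s : ℝ := Real.sqrt (1 + c) with hs_def
  set L : ℝ := LssN π0 π1 π2 π3 N with hL_def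
  have hLeq : L = (a / (2 * π0 * π3)) * (s - 1) := rfl
  have ha : 1 < a := by
    rw [ha_def]
    have h1 : 0 < π1 / (N:ℝ) := by positivity
    nlinarith [mul_pos hπ0 hπ2]
  have ha0 : 0 < a := by linarith
  have hc : 0 < c := by
    rw [hc_def]
    apply div_pos (by nlinarith [mul_pos (mul_pos (show (0:ℝ)<1-π0 by linarith) hπ0) hπ3]) (by positivity)
  have hsnn : 0 ≤ s := Real.sqrt_nonneg _
  have hs2 : s ^ 2 = 1 + c := Real.sq_sqrt (by linarith)
  have hcN : c * ((N:ℝ) * a ^ 2) = 4 * (1 - π0) * π0 * π3 := by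
    rw [hc_def]; field_simp
  have haN : a * N = N + N * (π0 * π2) + π1 := by
    rw [ha_def]; field_simp
  clear_value a c s L
  clear ha_def hc_def hs_def hL_def
  have hs1 : 1 < s := by nlinarith
  have hL : 0 < L := by
    rw [hLeq]; apply mul_pos (by positivity); linarith
  have hQ : π0 * π3 * N * L ^ 2 + N * a * L - (1 - π0) = 0 := by
    rw [hLeq]
    field_simp
    linear_combination ((N:ℝ)*a^2) * hs2 + hcN
  have hNL : (N:ℝ) * L < 1 := by
    nlinarith [mul_pos hNpos hL,
      mul_pos (mul_pos (mul_pos hπ0 hπ3) hNpos) (mul_pos hL hL)]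
  refine ⟨hL, hNL, ?_, ?_⟩
  · have hD : (0:ℝ) < 1 + N * π2 * L + N * π3 * L ^ 2 := by positivity
    field_simp
    linear_combination (-1:ℝ) * hQ + L * haN
  · intro x hx hrel
    have hDx : (0:ℝ) < 1 + N * π2 * x + N * π3 * x ^ 2 := by positivity
    have hQx : π0 * π3 * N * x ^ 2 + N * a * x - (1 - π0) = 0 := by
      field_simp at hrel
      linear_combination (-1:ℝ) * hrel + x * haN
    have hfac : (x - L) * (π0 * π3 * N * (x + L) + N * a) = 0 := by
      linear_combination hQx - hQ
    have hpos : 0 < π0 * π3 * N * (x + L) + N * a := by positivity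
    rcases mul_eq_zero.mp hfac with h | h
    · linarith
    · linarith
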